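/- Closed form for the degree-1 partial derivative of the degree-2 objective: for every p₂ ∈ (0,1), ∫₀¹ (−log(1−t)) / ((1−p₂) + 2·p₂·t)² dt = log((1+p₂)/(1−p₂)) / (2·p₂·(1+p₂)). -/

import Mathlib

open MeasureTheory Real

theorem stmt_17 (p₂ : ℝ) (h0 : 0 < p₂) (h1 : p₂ < 1) :
    ∫ t in Set.Ioo (0 : ℝ) 1, (-Real.log (1 - t)) / ((1 - p₂) + 2 * p₂ * t) ^ 2 =
      Real.log ((1 + p₂) / (1 - p₂)) / (2 * p₂ * (1 + p₂)) := by
  have ha : (0:ℝ) < 1 - p₂ := by linarith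
  have hc : (0:ℝ) < 1 + p₂ := by linarith
  have hb : (0:ℝ) < 2 * p₂ := by linarith
  set G : ℝ → ℝ := fun t =>
    (1 - t) * Real.log (1 - t) / (((1 - p₂) + 2 * p₂ * t) * (1 + p₂))
      + Real.log ((1 - p₂) + 2 * p₂ * t) / (2 * p₂ * (1 + p₂)) with hGdef
  have hden : ∀ t : ℝ, 0 ≤ t → 0 < (1 - p₂) + 2 * p₂ * t := by
    intro t ht; nlinarith
  -- derivative of G on (0,1)
  have hD : ∀ t : ℝ, HasDerivAt (fun t : ℝ => (1 - p₂) + 2 * p₂ * t) (2 * p₂) t := by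
    intro t
    simpa using ((hasDerivAt_id t).const_mul (2 * p₂)).const_add (1 - p₂)
  have hderiv : ∀ t ∈ Set.Ioo (0:ℝ) 1,
      HasDerivAt G ((-Real.log (1 - t)) / ((1 - p₂) + 2 * p₂ * t) ^ 2) t := by
    intro t ht
    have h1t : (0:ℝ) < 1 - t := by linarith [ht.2]
    have hdt : 0 < (1 - p₂) + 2 * p₂ * t := hden t ht.1.le
    have hsub : HasDerivAt (fun t : ℝ => 1 - t) (-1) t := by
      simpa using (hasDerivAt_id t).const_sub 1
    have h₁ : HasDerivAt (fun t : ℝ => (1 - t) * Real.log (1 - t))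
        ((Real.log (1 - t) + 1) * (-1)) t :=
      (Real.hasDerivAt_mul_log h1t.ne').comp t hsub
    have h₂ : HasDerivAt (fun t : ℝ => ((1 - p₂) + 2 * p₂ * t) * (1 + p₂))
        (2 * p₂ * (1 + p₂)) t := (hD t).mul_const (1 + p₂)
    have hterm1 : HasDerivAt (fun t : ℝ =>
        (1 - t) * Real.log (1 - t) / (((1 - p₂) + 2 * p₂ * t) * (1 + p₂)))
        (((Real.log (1 - t) + 1) * (-1) * (((1 - p₂) + 2 * p₂ * t) * (1 + p₂))
          - (1 - t) * Real.log (1 - t) * (2 * p₂ * (1 + p₂)))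
          / (((1 - p₂) + 2 * p₂ * t) * (1 + p₂)) ^ 2) t :=
      h₁.div h₂ (by positivity)
    have hlog : HasDerivAt (fun t : ℝ => Real.log ((1 - p₂) + 2 * p₂ * t))
        (((1 - p₂) + 2 * p₂ * t)⁻¹ * (2 * p₂)) t :=
      by have := (Real.hasDerivAt_log hdt.ne').comp t (hD t); exact this
    have hterm2 := hlog.div_const (2 * p₂ * (1 + p₂))
    have := hterm1.add hterm2
    refine this.congr_deriv ?_
    have hd2 : ((1 - p₂) + 2 * p₂ * t) ≠ 0 := hdt.ne'
    field_simp
    ring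
  -- continuity of G where the denominator is positive
  have hcont : ∀ x : ℝ, 0 < (1 - p₂) + 2 * p₂ * x → ContinuousAt G x := by
    intro x hx
    have c1 : ContinuousAt (fun t : ℝ => (1 - t) * Real.log (1 - t)) x :=
      (Real.continuous_mul_log.comp (continuous_const.sub continuous_id)).continuousAt
    have cD : ContinuousAt (fun t : ℝ => (1 - p₂) + 2 * p₂ * t) x := by fun_prop
    exact ((c1.div (cD.mul continuousAt_const) (mul_pos hx hc).ne').add
      ((cD.log hx.ne').div_const _))
  have hG0 : Filter.Tendsto G (nhdsWithin 0 (Set.Ioi 0))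
      (nhds (Real.log (1 - p₂) / (2 * p₂ * (1 + p₂)))) := by
    have h := (hcont 0 (by simpa using ha)).tendsto
    have h2 : Filter.Tendsto G (nhdsWithin 0 (Set.Ioi 0)) (nhds (G 0)) :=
      h.mono_left nhdsWithin_le_nhds
    convert h2 using 2
    simp [hGdef]
  have hG1 : Filter.Tendsto G (nhdsWithin 1 (Set.Iio 1))
      (nhds (Real.log (1 + p₂) / (2 * p₂ * (1 + p₂)))) := by
    have hx1 : 0 < (1 - p₂) + 2 * p₂ * 1 := by linarith
    have h := (hcont 1 hx1).tendsto
    have h2 : Filter.Tendsto G (nhdsWithin 1 (Set.Iio 1)) (nhds (G 1)) :=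
      h.mono_left nhdsWithin_le_nhds
    convert h2 using 2
    simp [hGdef]
    ring_nf
  -- integrability of the (nonnegative) integrand
  have hint : IntervalIntegrable
      (fun t => (-Real.log (1 - t)) / ((1 - p₂) + 2 * p₂ * t) ^ 2) volume 0 1 := by
    apply intervalIntegral.intervalIntegrable_deriv_of_nonneg (g := G)
    · rw [Set.uIcc_of_le (by norm_num : (0:ℝ) ≤ 1)]
      intro x hx
      exact (hcont x (hden x hx.1)).continuousWithinAt
    · simpa using hderiv
    · intro x hx
      simp only [min_def, max_def] at hx
      norm_num at hx
      have h1x : (0:ℝ) < 1 - x := by linarith [hx.2]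
      apply div_nonneg _ (sq_nonneg _)
      simp only [neg_nonneg]
      exact Real.log_nonpos (by linarith) (by linarith)
  have key := intervalIntegral.integral_eq_sub_of_hasDerivAt_of_tendsto
    (by norm_num : (0:ℝ) < 1) hderiv hint hG0 hG1
  rw [← MeasureTheory.integral_Ioc_eq_integral_Ioo,
    ← intervalIntegral.integral_of_le (by norm_num : (0:ℝ) ≤ 1), key,
    Real.log_div hc.ne' ha.ne', sub_div]
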